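/- The number of semi-standard Young tableaux of shape λ = (λ₁ ≥ ... ≥ λ_r ≥ 0) with entries in {1,...,r} equals the product over all boxes u of λ of (r + c(u))/h(u), where c(u) = j - i is the content of the box in row i and column j, and h(u) is the hook length of u. -/

import Mathlib

def IsPartition (r : ℕ) (μ : ℕ → ℕ) : Prop :=
  (∀ i j, i ≤ j → μ j ≤ μ i) ∧ ∀ i, r ≤ i → μ i = 0

def ZeroOutside (μ : ℕ → ℕ) (T : ℕ → ℕ → ℕ) : Prop :=
  ∀ i j, ¬ j < μ i → T i j = 0

/-- A semistandard filling of the Young diagram of `μ` (cells `(i,j)` with `j < μ i`)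
with entries in `{1,…,r}`: weakly increasing along rows, strictly increasing down columns. -/
def IsSSYT (μ : ℕ → ℕ) (r : ℕ) (T : ℕ → ℕ → ℕ) : Prop :=
  (∀ i j, j < μ i → 1 ≤ T i j ∧ T i j ≤ r) ∧
  (∀ i j k, j ≤ k → k < μ i → T i j ≤ T i k) ∧
  (∀ i j, j < μ (i + 1) → T i j < T (i + 1) j)

/-- the `v`-weight: number of boxes of `μ` filled with entry `v`. -/
noncomputable def wgt (μ : ℕ → ℕ) (T : ℕ → ℕ → ℕ) (v : ℕ) : ℕ :=
  {p : ℕ × ℕ | p.2 < μ p.1 ∧ T p.1 p.2 = v}.ncard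

/-- A `(v)`-strip of width `w`: one box in each of the `w` columns, all filled with `v`,
in weakly rising (left-to-right) configuration; `f j` is the row of the box in column `j`. -/
def HasIStrip (μ : ℕ → ℕ) (w : ℕ) (T : ℕ → ℕ → ℕ) (v : ℕ) : Prop :=
  ∃ f : ℕ → ℕ, (∀ j k, j ≤ k → k < w → f k ≤ f j) ∧
    ∀ j, j < w → j < μ (f j) ∧ T (f j) j = v

/-- `(f, m)` is a `(v,v+1)`-strip of width `w`: one box per column, entries `v` in the
first `m` columns and `v+1` thereafter, weakly rising left-to-right. -/
def IsIIStrip (μ : ℕ → ℕ) (w : ℕ) (T : ℕ → ℕ → ℕ) (v : ℕ) (f : ℕ → ℕ) (m : ℕ) : Prop :=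
  m ≤ w ∧ (∀ j k, j ≤ k → k < w → f k ≤ f j) ∧ (∀ j, j < w → j < μ (f j)) ∧
  (∀ j, j < m → T (f j) j = v) ∧ (∀ j, m ≤ j → j < w → T (f j) j = v + 1)

def HasIIStrip (μ : ℕ → ℕ) (w : ℕ) (T : ℕ → ℕ → ℕ) (v : ℕ) : Prop :=
  ∃ f m, IsIIStrip μ w T v f m

/-- 1-strip-less: no `(i)`-strip for `i ∈ {1,…,r}` and no `(i,i+1)`-strip for
`i ∈ {1,…,r-1}`. -/
def OneStripLess (μ : ℕ → ℕ) (w : ℕ) (r : ℕ) (T : ℕ → ℕ → ℕ) : Prop :=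
  (∀ v, 1 ≤ v → v ≤ r → ¬ HasIStrip μ w T v) ∧
  (∀ v, 1 ≤ v → v ≤ r - 1 → ¬ HasIIStrip μ w T v)

/-- Number of SSYTs of shape `μ` with entries in `{1,…,r}`. -/
noncomputable def ssytCount (r : ℕ) (μ : ℕ → ℕ) : ℕ :=
  {T : ℕ → ℕ → ℕ | IsSSYT μ r T ∧ ZeroOutside μ T}.ncard

/-- `μ` with its first `j` parts removed. -/
def shiftPart (μ : ℕ → ℕ) (j : ℕ) : ℕ → ℕ := fun i => μ (i + j)

/-- A standard Young tableau of shape `μ` with entries `1,…,N`. -/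
def IsSYT (μ : ℕ → ℕ) (N : ℕ) (T : ℕ → ℕ → ℕ) : Prop :=
  (∀ i j, j < μ i → 1 ≤ T i j ∧ T i j ≤ N) ∧
  (∀ i j i' j', j < μ i → j' < μ i' → T i j = T i' j' → (i, j) = (i', j')) ∧
  (∀ i j, j + 1 < μ i → T i j < T i (j + 1)) ∧
  (∀ i j, j < μ (i + 1) → T i j < T (i + 1) j)

/-- `k` is a descent of the SYT `T`: the entry `k+1` appears in a strictly lower row. -/
def IsDescent (μ : ℕ → ℕ) (T : ℕ → ℕ → ℕ) (k : ℕ) : Prop :=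
  ∃ i j i' j', j < μ i ∧ j' < μ i' ∧ T i j = k ∧ T i' j' = k + 1 ∧ i < i'

open Finset

noncomputable def hcQ (j n : ℕ) : ℚ := ∑ s ∈ range n, (s : ℚ) ^ j

noncomputable def hcW (r : ℕ) (f : ℕ → ℚ) : ℚ :=
  ∏ i ∈ range r, ∏ m ∈ Ioo i r, (f i - f m)

def hcX (r : ℕ) (lam : ℕ → ℕ) (k : ℕ) : ℕ := lam k + (r - 1 - k)

noncomputable def hcD (r : ℕ) (lam : ℕ → ℕ) : ℚ :=
  hcW r (fun n => (hcX r lam n : ℚ)) / ∏ i ∈ range r, (Nat.factorial i : ℚ)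

lemma hc_downward {s : Finset ℕ} (h : ∀ j ∈ s, ∀ k, k ≤ j → k ∈ s) (m : ℕ) :
    m ∈ s ↔ m < s.card := by
  constructor
  · intro hm
    have hsub : range (m + 1) ⊆ s := fun k hk => h m hm k (Nat.lt_succ_iff.mp (mem_range.mp hk))
    have := Finset.card_le_card hsub
    simpa using this
  · intro hm
    by_contra hns
    have hsub : s ⊆ range m := by
      intro j hj
      rw [mem_range]
      by_contra hjm
      exact hns (h j hj m (le_of_not_gt hjm))
    have := Finset.card_le_card hsub
    simp at this
    omega

lemma hc_prod_asc (a n : ℕ) (ha : 1 ≤ a) :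
    (∏ j ∈ range n, ((a + j : ℕ) : ℚ)) * ((a - 1).factorial : ℚ)
      = ((a + n - 1).factorial : ℚ) := by
  induction n with
  | zero => simp
  | succ n ih =>
      rw [Finset.prod_range_succ, mul_comm _ ((a + n : ℕ) : ℚ), mul_assoc, ih]
      have h1 : a + (n + 1) - 1 = (a + n - 1) + 1 := by omega
      rw [h1, Nat.factorial_succ]
      have h2 : a + n - 1 + 1 = a + n := by omega
      rw [h2]
      push_cast
      ring

lemma hc_prod_desc (L c a : ℕ) : ∀ b, a ≤ b → b ≤ L →
    (∏ j ∈ Ico a b, ((L - j + c : ℕ) : ℚ)) * ((L - b + c).factorial : ℚ)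
      = ((L - a + c).factorial : ℚ) := by
  intro b hab
  induction b, hab using Nat.le_induction with
  | base => intro _; simp
  | succ n hn ih =>
      intro hnL
      rw [Finset.prod_Ico_succ_top hn]
      have h1 : L - n + c = (L - (n + 1) + c) + 1 := by omega
      have := ih (by omega)
      rw [h1, Nat.factorial_succ] at this
      rw [← this]
      push_cast [h1]
      ring

lemma hc_W_congr (r : ℕ) (f g : ℕ → ℚ) (h : ∀ n, n < r → f n = g n) :
    hcW r f = hcW r g := by
  unfold hcW
  refine Finset.prod_congr rfl fun i hi => Finset.prod_congr rfl fun m hm => ?_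
  rw [h i (mem_range.mp hi), h m (mem_Ioo.mp hm).2]

lemma hc_W_cast (r : ℕ) (X : ℕ → ℕ) (h : ∀ i m, i < m → m < r → X m ≤ X i) :
    hcW r (fun n => (X n : ℚ)) = ∏ i ∈ range r, ∏ m ∈ Ioo i r, ((X i - X m : ℕ) : ℚ) := by
  unfold hcW
  refine Finset.prod_congr rfl fun i hi => Finset.prod_congr rfl fun m hm => ?_
  rw [Nat.cast_sub (h i m (mem_Ioo.mp hm).1 (mem_Ioo.mp hm).2)]

lemma hc_W_succ (r : ℕ) (f : ℕ → ℚ) :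
    hcW (r + 1) f = hcW r f * ∏ i ∈ range r, (f i - f r) := by
  unfold hcW
  rw [Finset.prod_range_succ]
  have h1 : Ioo r (r + 1) = ∅ := by
    ext x; simp
  rw [h1, Finset.prod_empty, mul_one, ← Finset.prod_mul_distrib]
  refine Finset.prod_congr rfl fun i hi => ?_
  have h2 : Ioo i (r + 1) = insert r (Ioo i r) := by
    ext x; simp [mem_range] at hi ⊢; omega
  rw [h2, Finset.prod_insert (by simp), mul_comm]

def hcSet (r : ℕ) (lam : ℕ → ℕ) : Set (ℕ → ℕ → ℕ) :=
  {T | IsSSYT lam r T ∧ ZeroOutside lam T}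

lemma hc_count (r : ℕ) (lam : ℕ → ℕ) : ssytCount r lam = (hcSet r lam).ncard := rfl

section PartA

variable {r : ℕ} {lam : ℕ → ℕ}

lemma hc_rowval (hmono : ∀ i j, i ≤ j → lam j ≤ lam i) {N : ℕ} {T : ℕ → ℕ → ℕ}
    (hT : IsSSYT lam N T) : ∀ i j, j < lam i → i + 1 ≤ T i j := by
  intro i
  induction i with
  | zero => exact fun j h => (hT.1 0 j h).1
  | succ n ih =>
      intro j hj
      have hj' : j < lam n := lt_of_lt_of_le hj (hmono n (n + 1) (by omega))
      have := hT.2.2 n j hj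
      have := ih j hj'
      omega

noncomputable def hcMu (r : ℕ) (T : ℕ → ℕ → ℕ) (lam : ℕ → ℕ) (i : ℕ) : ℕ :=
  ((range (lam i)).filter (fun j => T i j ≤ r)).card

lemma hc_mu_mem {N : ℕ} {T : ℕ → ℕ → ℕ} (hT : IsSSYT lam N T) (i j : ℕ) :
    j < hcMu r T lam i ↔ (j < lam i ∧ T i j ≤ r) := by
  classical
  rw [hcMu, ← hc_downward]
  · simp
  · intro j' hj' k hk
    simp only [mem_filter, mem_range] at hj' ⊢
    exact ⟨lt_of_le_of_lt hk hj'.1, le_trans (hT.2.1 i k j' hk hj'.1) hj'.2⟩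

lemma hc_mu_le (T : ℕ → ℕ → ℕ) (i : ℕ) : hcMu r T lam i ≤ lam i := by
  classical
  calc hcMu r T lam i ≤ (range (lam i)).card := Finset.card_le_card (filter_subset _ _)
  _ = lam i := card_range _

lemma hc_mu_ge (hmono : ∀ i j, i ≤ j → lam j ≤ lam i) {T : ℕ → ℕ → ℕ}
    (hT : IsSSYT lam (r + 1) T) (i : ℕ) : lam (i + 1) ≤ hcMu r T lam i := by
  classical
  have hsub : range (lam (i + 1)) ⊆ (range (lam i)).filter (fun j => T i j ≤ r) := by
    intro j hj
    rw [mem_range] at hj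
    rw [mem_filter, mem_range]
    refine ⟨lt_of_lt_of_le hj (hmono i (i + 1) (by omega)), ?_⟩
    have h1 := hT.2.2 i j hj
    have h2 := (hT.1 (i + 1) j hj).2
    omega
  have := Finset.card_le_card hsub
  simpa [hcMu] using this

lemma hc_mu_zero (hmono : ∀ i j, i ≤ j → lam j ≤ lam i) {T : ℕ → ℕ → ℕ}
    (hT : IsSSYT lam (r + 1) T) (i : ℕ) (hi : r ≤ i) : hcMu r T lam i = 0 := by
  classical
  rw [hcMu, Finset.card_eq_zero, Finset.filter_eq_empty_iff]
  intro j hj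
  rw [mem_range] at hj
  have := hc_rowval hmono hT i j hj
  omega

lemma hc_finite (hp : IsPartition r lam) : (hcSet r lam).Finite := by
  classical
  have key : Set.InjOn
      (fun (T : ℕ → ℕ → ℕ) => (fun p : Fin r × Fin (lam 0) =>
        (⟨min (T p.1 p.2) r, by omega⟩ : Fin (r + 1)))) (hcSet r lam) := by
    intro T hT T' hT' heq
    funext i j
    by_cases hj : j < lam i
    · have hi : i < r := by
        by_contra hi
        rw [hp.2 i (le_of_not_gt hi)] at hj
        omega
      have hj0 : j < lam 0 := lt_of_lt_of_le hj (hp.1 0 i (Nat.zero_le _))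
      have := congrFun heq (⟨i, hi⟩, ⟨j, hj0⟩)
      simp only [Fin.mk.injEq] at this
      have hb := (hT.1.1 i j hj).2
      have hb' := (hT'.1.1 i j hj).2
      rwa [min_eq_left hb, min_eq_left hb'] at this
    · rw [hT.2 i j hj, hT'.2 i j hj]
  exact Set.Finite.of_finite_image (Set.toFinite _) key

lemma hc_trunc_mem (hmono : ∀ i j, i ≤ j → lam j ≤ lam i) {T : ℕ → ℕ → ℕ}
    (hT : IsSSYT lam (r + 1) T) :
    (fun i j => if j < hcMu r T lam i then T i j else 0) ∈ hcSet r (hcMu r T lam) := by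
  constructor
  · refine ⟨fun i j hj => ?_, fun i j k hjk hk => ?_, fun i j hj => ?_⟩ <;> dsimp only
    · rw [if_pos hj]
      have := (hc_mu_mem hT i j).mp hj
      exact ⟨(hT.1 i j this.1).1, this.2⟩
    · rw [if_pos hk, if_pos (lt_of_le_of_lt hjk hk)]
      exact hT.2.1 i j k hjk ((hc_mu_mem hT i k).mp hk).1
    · have hj' : j < hcMu r T lam i := by
        have h1 := hc_mu_ge hmono hT i
        have h2 := hc_mu_le (r := r) (lam := lam) T (i + 1)
        omega
      rw [if_pos hj, if_pos hj']
      exact hT.2.2 i j ((hc_mu_mem hT (i + 1) j).mp hj).1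
  · intro i j hj
    dsimp only
    rw [if_neg hj]

lemma hc_ext_mem (hp : IsPartition (r + 1) lam) {mu : ℕ → ℕ} {T' : ℕ → ℕ → ℕ}
    (h1 : ∀ n, mu n ≤ lam n) (h2 : ∀ n, lam (n + 1) ≤ mu n)
    (hT' : IsSSYT mu r T') :
    (fun i j => if j < mu i then T' i j else if j < lam i then r + 1 else 0)
      ∈ hcSet (r + 1) lam := by
  constructor
  · refine ⟨fun i j hj => ?_, fun i j k hjk hk => ?_, fun i j hj => ?_⟩ <;> dsimp only
    · by_cases hm : j < mu i
      · rw [if_pos hm]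
        have := hT'.1 i j hm
        omega
      · rw [if_neg hm, if_pos hj]
        omega
    · by_cases hm : k < mu i
      · rw [if_pos hm, if_pos (lt_of_le_of_lt hjk hm)]
        exact hT'.2.1 i j k hjk hm
      · rw [if_neg hm, if_pos hk]
        by_cases hm' : j < mu i
        · rw [if_pos hm']
          have := (hT'.1 i j hm').2
          omega
        · rw [if_neg hm', if_pos (lt_of_le_of_lt hjk hk)]
    · have hji : j < mu i := lt_of_lt_of_le hj (h2 i)
      rw [if_pos hji]
      by_cases hm : j < mu (i + 1)
      · rw [if_pos hm]
        exact hT'.2.2 i j hm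
      · rw [if_neg hm, if_pos hj]
        have := (hT'.1 i j hji).2
        omega
  · intro i j hj
    have hji : ¬ j < mu i := fun h => hj (lt_of_lt_of_le h (h1 i))
    dsimp only
    rw [if_neg hji, if_neg hj]
end PartA

section PartA2

variable {r : ℕ} {lam : ℕ → ℕ}

lemma hc_antitone (f : ℕ → ℕ) (h : ∀ i, f (i + 1) ≤ f i) :
    ∀ i j, i ≤ j → f j ≤ f i := by
  intro i j hij
  induction j, hij using Nat.le_induction with
  | base => exact le_refl _
  | succ n hn ih => exact le_trans (h n) ih

lemma hc_left {T : ℕ → ℕ → ℕ} (hT : T ∈ hcSet (r + 1) lam) :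
    (fun i j => if j < hcMu r T lam i then
        (if j < hcMu r T lam i then T i j else 0)
      else if j < lam i then r + 1 else 0) = T := by
  funext i j
  by_cases hm : j < hcMu r T lam i
  · simp [hm]
  · rw [if_neg hm]
    by_cases h2 : j < lam i
    · rw [if_pos h2]
      have hb := (hT.1.1 i j h2).2
      have : ¬ (j < lam i ∧ T i j ≤ r) := fun hc => hm ((hc_mu_mem hT.1 i j).mpr hc)
      omega
    · rw [if_neg h2, hT.2 i j h2]

lemma hc_right_mu {mu : ℕ → ℕ} {T' : ℕ → ℕ → ℕ}
    (h1 : ∀ n, mu n ≤ lam n) (hT' : T' ∈ hcSet r mu) :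
    hcMu r (fun i j => if j < mu i then T' i j else if j < lam i then r + 1 else 0) lam
      = mu := by
  classical
  funext n
  rw [hcMu]
  have : (range (lam n)).filter
      (fun j => (if j < mu n then T' n j else if j < lam n then r + 1 else 0) ≤ r)
        = range (mu n) := by
    ext j
    simp only [mem_filter, mem_range]
    constructor
    · rintro ⟨hjl, hle⟩
      by_contra hjm
      rw [if_neg hjm, if_pos hjl] at hle
      omega
    · intro hjm
      refine ⟨lt_of_lt_of_le hjm (h1 n), ?_⟩
      rw [if_pos hjm]
      exact (hT'.1.1 n j hjm).2
  rw [this, card_range]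

lemma hc_right_T {mu : ℕ → ℕ} {T' : ℕ → ℕ → ℕ}
    (h1 : ∀ n, mu n ≤ lam n) (hT' : T' ∈ hcSet r mu) :
    (fun i j => if j < hcMu r
        (fun i j => if j < mu i then T' i j else if j < lam i then r + 1 else 0) lam i
      then (if j < mu i then T' i j else if j < lam i then r + 1 else 0) else 0) = T' := by
  rw [hc_right_mu h1 hT']
  funext i j
  by_cases hm : j < mu i
  · simp [hm]
  · rw [if_neg hm, hT'.2 i j hm]

lemma hc_mu_isPart (hp : IsPartition (r + 1) lam) (d : Fin r → ℕ)
    (hd : ∀ i : Fin r, d i ∈ Finset.Icc (lam (↑i + 1)) (lam ↑i)) :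
    IsPartition r (fun n => if h : n < r then d ⟨n, h⟩ else 0) := by
  constructor
  · apply hc_antitone
    intro n
    by_cases h : n + 1 < r
    · have h' : n < r := by omega
      simp only [dif_pos h, dif_pos h']
      have ha := (mem_Icc.mp (hd ⟨n + 1, h⟩)).2
      have hb := (mem_Icc.mp (hd ⟨n, h'⟩)).1
      exact le_trans ha hb
    · simp only [dif_neg h]
      omega
  · intro n hn
    simp [Nat.not_lt.mpr hn]

lemma hc_rec (r : ℕ) (lam : ℕ → ℕ) (hp : IsPartition (r + 1) lam) :
    ssytCount (r + 1) lam =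
      ∑ d ∈ Fintype.piFinset (fun i : Fin r => Finset.Icc (lam (↑i + 1)) (lam ↑i)),
        ssytCount r (fun n => if h : n < r then d ⟨n, h⟩ else 0) := by
  classical
  have hmono := hp.1
  have hS : (hcSet (r + 1) lam).Finite := hc_finite hp
  have hmu : ∀ d : Fin r → ℕ,
      (d ∈ Fintype.piFinset (fun i : Fin r => Finset.Icc (lam (↑i + 1)) (lam ↑i))) →
      IsPartition r (fun n => if h : n < r then d ⟨n, h⟩ else 0) := by
    intro d hd
    exact hc_mu_isPart hp d (Fintype.mem_piFinset.mp hd)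
  rw [hc_count, Set.ncard_eq_toFinset_card _ hS]
  rw [Finset.card_eq_sum_card_fiberwise
    (f := fun T => (fun i : Fin r => hcMu r T lam ↑i))
    (t := Fintype.piFinset (fun i : Fin r => Finset.Icc (lam (↑i + 1)) (lam ↑i)))
    (fun T hT => by
      rw [Finset.mem_coe, Set.Finite.mem_toFinset] at hT
      exact Fintype.mem_piFinset.mpr fun i =>
        mem_Icc.mpr ⟨hc_mu_ge hmono hT.1 ↑i, hc_mu_le T ↑i⟩)]
  refine Finset.sum_congr rfl fun d hd => ?_
  set mu : ℕ → ℕ := fun n => if h : n < r then d ⟨n, h⟩ else 0 with hmudef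
  have hd' := Fintype.mem_piFinset.mp hd
  have hmu1 : ∀ n, mu n ≤ lam n := by
    intro n
    by_cases h : n < r
    · simp only [hmudef, dif_pos h]
      exact (mem_Icc.mp (hd' ⟨n, h⟩)).2
    · simp only [hmudef, dif_neg h]
      omega
  have hmu2 : ∀ n, lam (n + 1) ≤ mu n := by
    intro n
    by_cases h : n < r
    · simp only [hmudef, dif_pos h]
      exact (mem_Icc.mp (hd' ⟨n, h⟩)).1
    · simp only [hmudef, dif_neg h]
      rw [hp.2 (n + 1) (by omega)]
  have hS' : (hcSet r mu).Finite := hc_finite (hmu d hd)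
  rw [hc_count, Set.ncard_eq_toFinset_card _ hS']
  refine Finset.card_nbij'
    (fun T => fun i j => if j < hcMu r T lam i then T i j else 0)
    (fun T' => fun i j => if j < mu i then T' i j else if j < lam i then r + 1 else 0)
    ?_ ?_ ?_ ?_
  · intro T hT
    rw [Finset.mem_coe, Finset.mem_filter, Set.Finite.mem_toFinset] at hT
    obtain ⟨hTS, hTd⟩ := hT
    have heq : hcMu r T lam = mu := by
      funext n
      by_cases h : n < r
      · simp only [hmudef, dif_pos h]
        exact congrFun hTd ⟨n, h⟩
      · simp only [hmudef, dif_neg h]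
        exact hc_mu_zero hmono hTS.1 n (le_of_not_gt h)
    rw [Finset.mem_coe, Set.Finite.mem_toFinset]
    beta_reduce
    rw [heq]
    have h := hc_trunc_mem hmono hTS.1
    rwa [heq] at h
  · intro T' hT'
    rw [Finset.mem_coe, Set.Finite.mem_toFinset] at hT'
    rw [Finset.mem_coe, Finset.mem_filter, Set.Finite.mem_toFinset]
    beta_reduce
    refine ⟨hc_ext_mem hp hmu1 hmu2 hT'.1, ?_⟩
    funext i
    have h := congrFun (hc_right_mu hmu1 hT') (↑i : ℕ)
    rw [h]
    simp only [hmudef, dif_pos i.isLt]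
  · intro T hT
    rw [Finset.mem_coe, Finset.mem_filter, Set.Finite.mem_toFinset] at hT
    obtain ⟨hTS, hTd⟩ := hT
    have heq : hcMu r T lam = mu := by
      funext n
      by_cases h : n < r
      · simp only [hmudef, dif_pos h]
        exact congrFun hTd ⟨n, h⟩
      · simp only [hmudef, dif_neg h]
        exact hc_mu_zero hmono hTS.1 n (le_of_not_gt h)
    beta_reduce
    rw [← heq]
    exact hc_left hTS
  · intro T' hT'
    rw [Finset.mem_coe, Set.Finite.mem_toFinset] at hT'
    beta_reduce
    exact hc_right_T hmu1 hT'

end PartA2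

section PartB

open Matrix

noncomputable def hcC (j k : ℕ) : ℚ :=
  bernoulli (j - k) * ((j + 1).choose (j - k)) / (j + 1)

lemma hc_C_diag (j : ℕ) : hcC j j = 1 / (j + 1) := by
  simp [hcC]

lemma hc_Q_poly (j n : ℕ) :
    hcQ j n = ∑ k ∈ range (j + 1), hcC j k * (n : ℚ) ^ (k + 1) := by
  rw [hcQ, sum_range_pow, ← Finset.sum_range_reflect]
  refine Finset.sum_congr rfl fun k hk => ?_
  rw [mem_range] at hk
  have h1 : j + 1 - 1 - k = j - k := by omega
  have h2 : j + 1 - (j - k) = k + 1 := by omega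
  rw [h1, hcC, h2]
  ring

lemma hc_prod_Ioi (r : ℕ) (i : Fin r) (g : ℕ → ℚ) :
    ∏ j ∈ Ioi i, g ↑j = ∏ m ∈ Ioo (i : ℕ) r, g m := by
  have h1 : Ioo (i : ℕ) r = Ioc (i : ℕ) (r - 1) := by
    ext x
    simp only [mem_Ioo, mem_Ioc]
    have := i.isLt
    omega
  rw [← Fin.map_valEmbedding_Ioi, Finset.prod_map]
  rfl

lemma hc_prod_fin (r : ℕ) (g : ℕ → ℕ → ℚ) :
    (∏ i : Fin r, ∏ j ∈ Ioi i, g ↑i ↑j) = ∏ i ∈ range r, ∏ m ∈ Ioo i r, g i m := by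
  rw [← Fin.prod_univ_eq_prod_range (fun i => ∏ m ∈ Ioo i r, g i m) r]
  exact Finset.prod_congr rfl fun i _ => hc_prod_Ioi r i (g ↑i)

noncomputable def hcE (r : ℕ) : ℚ := ∏ i ∈ range r, ∏ m ∈ Ioo i r, (-1 : ℚ)

lemma hc_E_sq (r : ℕ) : hcE r * hcE r = 1 := by
  rw [hcE, ← Finset.prod_mul_distrib]
  rw [Finset.prod_eq_one]
  intro i _
  rw [← Finset.prod_mul_distrib, Finset.prod_eq_one]
  intro m _
  norm_num

lemma hc_W_vand (r : ℕ) (f : ℕ → ℚ) :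
    hcW r f = hcE r * (Matrix.vandermonde fun i : Fin r => f ↑i).det := by
  rw [Matrix.det_vandermonde]
  have h1 : (∏ i : Fin r, ∏ j ∈ Ioi i, (f ↑j - f ↑i))
      = ∏ i ∈ range r, ∏ m ∈ Ioo i r, (f m - f i) :=
    hc_prod_fin r (fun i m => f m - f i)
  rw [h1, hcE, hcW, ← Finset.prod_mul_distrib]
  refine Finset.prod_congr rfl fun i _ => ?_
  rw [← Finset.prod_mul_distrib]
  refine Finset.prod_congr rfl fun m _ => ?_
  ring

lemma hc_sum_det (r : ℕ) (s : Fin r → Finset ℕ) (g : Fin r → ℕ → Fin r → ℚ) :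
    ∑ d ∈ Fintype.piFinset s, (Matrix.of fun i j => g i (d i) j).det
      = (Matrix.of fun i j => ∑ t ∈ s i, g i t j).det := by
  have h1 : ∀ M : Matrix (Fin r) (Fin r) ℚ,
      M.det = ∑ σ : Equiv.Perm (Fin r), (Equiv.Perm.sign σ : ℚ) * ∏ i, M i (σ i) := by
    intro M
    rw [← Matrix.det_transpose M, Matrix.det_apply']
    refine Finset.sum_congr rfl fun σ _ => ?_
    congr 1
  simp only [h1]
  rw [Finset.sum_comm]
  refine Finset.sum_congr rfl fun σ _ => ?_
  rw [← Finset.mul_sum]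
  congr 1
  simp only [Matrix.of_apply]
  exact (Finset.prod_univ_sum s (fun i t => g i t (σ i))).symm

end PartB

section PartB2

lemma hc_antitone' (f : ℕ → ℕ) (h : ∀ i, f (i + 1) ≤ f i) :
    ∀ i j, i ≤ j → f j ≤ f i := by
  intro i j hij
  induction j, hij using Nat.le_induction with
  | base => exact le_refl _
  | succ n hn ih => exact le_trans (h n) ih

lemma hc_X_anti (R : ℕ) (lam : ℕ → ℕ) (hmono : ∀ i j, i ≤ j → lam j ≤ lam i) :
    ∀ a b, a ≤ b → hcX R lam b ≤ hcX R lam a := by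
  apply hc_antitone'
  intro n
  have := hmono n (n + 1) (by omega)
  rw [hcX, hcX]
  omega

lemma hc_B_entry (r : ℕ) (lam : ℕ → ℕ) (hmono : ∀ i j, i ≤ j → lam j ≤ lam i)
    (k j : ℕ) (hk : k < r) :
    ∑ t ∈ Icc (lam (k + 1)) (lam k), ((t : ℚ) + r - 1 - k) ^ j
      = hcQ j (hcX (r + 1) lam k) - hcQ j (hcX (r + 1) lam (k + 1)) := by
  have hc : ((r - 1 - k : ℕ) : ℚ) = (r : ℚ) - 1 - k := by
    rw [Nat.cast_sub (show k ≤ r - 1 by omega), Nat.cast_sub (show 1 ≤ r by omega),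
      Nat.cast_one]
  have hmap : ∑ t ∈ Icc (lam (k + 1)) (lam k), (((t + (r - 1 - k) : ℕ) : ℚ)) ^ j
      = ∑ s ∈ Icc (lam (k + 1) + (r - 1 - k)) (lam k + (r - 1 - k)), ((s : ℚ)) ^ j := by
    rw [← Finset.map_add_right_Icc, Finset.sum_map]
    rfl
  calc ∑ t ∈ Icc (lam (k + 1)) (lam k), ((t : ℚ) + r - 1 - k) ^ j
      = ∑ t ∈ Icc (lam (k + 1)) (lam k), (((t + (r - 1 - k) : ℕ) : ℚ)) ^ j := by
        refine Finset.sum_congr rfl fun t _ => ?_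
        rw [Nat.cast_add, hc]
        ring_nf
    _ = ∑ s ∈ Icc (lam (k + 1) + (r - 1 - k)) (lam k + (r - 1 - k)), ((s : ℚ)) ^ j := hmap
    _ = ∑ s ∈ Ico (hcX (r + 1) lam (k + 1)) (hcX (r + 1) lam k), ((s : ℚ)) ^ j := by
        congr 1
        rw [← Finset.Ico_add_one_right_eq_Icc]
        congr 1
        · rw [hcX]
          omega
        · rw [hcX]
          omega
    _ = hcQ j (hcX (r + 1) lam k) - hcQ j (hcX (r + 1) lam (k + 1)) := by
        rw [hcQ, hcQ]
        exact Finset.sum_Ico_eq_sub _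
          (hc_X_anti (r + 1) lam hmono k (k + 1) (by omega))

end PartB2

section PartB3

open Matrix

lemma hc_triL (r : ℕ) :
    (Matrix.of fun i k : Fin r =>
      if k = i then (1 : ℚ) else if (k : ℕ) = (i : ℕ) + 1 then (-1 : ℚ) else 0).det = 1 := by
  rw [Matrix.det_of_upperTriangular]
  · exact Finset.prod_eq_one fun i _ => by simp
  · intro i k hki
    simp only [Matrix.of_apply]
    have h3 : (k : ℕ) < (i : ℕ) := by simpa using hki
    have h1 : ¬ k = i := by
      intro h
      rw [h] at h3
      omega
    have h2 : ¬ (k : ℕ) = (i : ℕ) + 1 := by omega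
    simp [h1, h2]

lemma hc_triU (r : ℕ) :
    (Matrix.of fun k j : Fin r =>
      if (k : ℕ) ≤ (j : ℕ) then hcC ↑j ↑k else 0).det = 1 / (r.factorial : ℚ) := by
  rw [Matrix.det_of_upperTriangular]
  · have h1 : ∀ j : Fin r, (if (j : ℕ) ≤ (j : ℕ) then hcC ↑j ↑j else 0) = 1 / ((j : ℕ) + 1 : ℚ) := by
      intro j
      rw [if_pos le_rfl, hc_C_diag]
    simp only [Matrix.of_apply, h1]
    have hfact : (∏ x : Fin r, (((x : ℕ) : ℚ) + 1)) = (r.factorial : ℚ) := by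
      rw [Fin.prod_univ_eq_prod_range (fun k => ((k : ℚ) + 1)) r,
        ← Finset.prod_range_add_one_eq_factorial, Nat.cast_prod]
      exact Finset.prod_congr rfl fun k _ => by push_cast; ring
    simp only [one_div]
    rw [Finset.prod_inv_distrib, hfact]
  · intro j k hkj
    simp only [Matrix.of_apply]
    rw [if_neg]
    have h3 : (k : ℕ) < (j : ℕ) := by simpa using hkj
    omega

lemma hc_triU2 (r : ℕ) (a : ℚ) :
    (Matrix.of fun m k : Fin r =>
      if (m : ℕ) ≤ (k : ℕ) then a ^ ((k : ℕ) - (m : ℕ)) else 0).det = 1 := by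
  rw [Matrix.det_of_upperTriangular]
  · exact Finset.prod_eq_one fun i _ => by simp
  · intro k m hmk
    simp only [Matrix.of_apply]
    rw [if_neg]
    have h3 : (m : ℕ) < (k : ℕ) := by simpa using hmk
    omega

lemma hc_L_mul (r : ℕ) (c : Fin r → ℕ → ℚ) (hc : ∀ j, c j r = 0) :
    ((Matrix.of fun i k : Fin r =>
        if k = i then (1 : ℚ) else if (k : ℕ) = (i : ℕ) + 1 then (-1 : ℚ) else 0)
      * (Matrix.of fun i j : Fin r => c j (i : ℕ)))
    = Matrix.of fun i j : Fin r => c j (i : ℕ) - c j ((i : ℕ) + 1) := by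
  ext i j
  rw [Matrix.mul_apply]
  simp only [Matrix.of_apply]
  have hsplit : ∀ k : Fin r,
      (if k = i then (1 : ℚ) else if (k : ℕ) = (i : ℕ) + 1 then (-1 : ℚ) else 0) * c j (k : ℕ)
        = (if k = i then c j (k : ℕ) else 0)
          + (if (k : ℕ) = (i : ℕ) + 1 then -(c j (k : ℕ)) else 0) := by
    intro k
    by_cases h1 : k = i
    · have h2 : ¬ (k : ℕ) = (i : ℕ) + 1 := by rw [h1]; omega
      simp [h1, h2]
    · by_cases h2 : (k : ℕ) = (i : ℕ) + 1 <;> simp [h1, h2]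
  rw [Finset.sum_congr rfl fun k _ => hsplit k, Finset.sum_add_distrib]
  rw [Finset.sum_ite_eq' Finset.univ i (fun k => c j (k : ℕ))]
  simp only [Finset.mem_univ, if_pos]
  by_cases hi : (i : ℕ) + 1 < r
  · have hiff : ∀ k : Fin r, ((k : ℕ) = (i : ℕ) + 1) ↔ (k = (⟨(i : ℕ) + 1, hi⟩ : Fin r)) := by
      intro k
      rw [Fin.ext_iff]
    simp only [hiff]
    rw [Finset.sum_ite_eq' Finset.univ (⟨(i : ℕ) + 1, hi⟩ : Fin r) (fun k => -(c j (k : ℕ)))]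
    simp only [Finset.mem_univ, if_pos]
    ring
  · have hir : (i : ℕ) + 1 = r := by have := i.isLt; omega
    have hz : ∀ k : Fin r, (if (k : ℕ) = (i : ℕ) + 1 then -(c j (k : ℕ)) else 0) = 0 := by
      intro k
      rw [if_neg]
      have := k.isLt
      omega
    rw [Finset.sum_congr rfl fun k _ => hz k]
    rw [Finset.sum_const_zero, hir, hc j]
    ring

lemma hc_Cm_mul (r : ℕ) (y : Fin r → ℕ) (a : ℕ) :
    (Matrix.of fun i j : Fin r => hcQ ↑j (y i) - hcQ ↑j a)
      = (Matrix.of fun i k : Fin r => ((y i : ℚ)) ^ ((k : ℕ) + 1) - ((a : ℚ)) ^ ((k : ℕ) + 1))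
        * (Matrix.of fun k j : Fin r => if (k : ℕ) ≤ (j : ℕ) then hcC ↑j ↑k else 0) := by
  ext i j
  rw [Matrix.mul_apply]
  simp only [Matrix.of_apply]
  rw [hc_Q_poly ↑j (y i), hc_Q_poly ↑j a, ← Finset.sum_sub_distrib]
  rw [Fin.sum_univ_eq_sum_range (fun k =>
    (((y i : ℚ)) ^ (k + 1) - ((a : ℚ)) ^ (k + 1)) * (if k ≤ (j : ℕ) then hcC ↑j k else 0)) r]
  rw [← Finset.sum_subset (Finset.range_subset_range.mpr (Nat.succ_le_of_lt j.isLt))]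
  · refine Finset.sum_congr rfl fun k hk => ?_
    rw [mem_range] at hk
    rw [if_pos (by omega)]
    ring
  · intro k _ hk
    rw [mem_range] at hk
    rw [if_neg (by omega), mul_zero]

lemma hc_Vb_mul (r : ℕ) (x : Fin r → ℚ) (a : ℚ) :
    (Matrix.of fun i k : Fin r => x i ^ ((k : ℕ) + 1) - a ^ ((k : ℕ) + 1)) =
      Matrix.diagonal (fun i => x i - a)
        * ((Matrix.vandermonde x)
          * Matrix.of (fun m k : Fin r => if (m : ℕ) ≤ (k : ℕ) then a ^ ((k : ℕ) - (m : ℕ)) else 0)) := by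
  ext i k
  rw [Matrix.diagonal_mul, Matrix.mul_apply]
  simp only [Matrix.of_apply, Matrix.vandermonde_apply]
  rw [Fin.sum_univ_eq_sum_range
    (fun m => x i ^ m * (if m ≤ (k : ℕ) then a ^ ((k : ℕ) - m) else 0)) r]
  rw [← Finset.sum_subset (Finset.range_subset_range.mpr (Nat.succ_le_of_lt k.isLt))]
  · rw [Finset.sum_congr rfl (fun m hm => by
      rw [if_pos (by rw [mem_range] at hm; omega)])]
    rw [mul_comm]
    have := geom_sum₂_mul (x i) a ((k : ℕ) + 1)
    simpa using this.symm
  · intro m _ hm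
    rw [mem_range] at hm
    rw [if_neg (by omega), mul_zero]

end PartB3

section PartB4

open Matrix

lemma hc_sum_W (r : ℕ) (lam : ℕ → ℕ) (hmono : ∀ i j, i ≤ j → lam j ≤ lam i) :
    ∑ d ∈ Fintype.piFinset (fun i : Fin r => Finset.Icc (lam (↑i + 1)) (lam ↑i)),
      hcW r (fun n => (hcX r (fun m => if h : m < r then d ⟨m, h⟩ else 0) n : ℚ))
    = hcW (r + 1) (fun n => (hcX (r + 1) lam n : ℚ)) / (r.factorial : ℚ) := by
  classical
  set fX : ℕ → ℚ := fun n => (hcX (r + 1) lam n : ℚ) with hfX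
  have step1 : ∀ d ∈ Fintype.piFinset (fun i : Fin r => Finset.Icc (lam (↑i + 1)) (lam ↑i)),
      hcW r (fun n => (hcX r (fun m => if h : m < r then d ⟨m, h⟩ else 0) n : ℚ))
        = hcE r * (Matrix.of fun i j : Fin r =>
            ((d i : ℚ) + (r : ℚ) - 1 - ((i : ℕ) : ℚ)) ^ (j : ℕ)).det := by
    intro d _
    have hcong : hcW r (fun n => (hcX r (fun m => if h : m < r then d ⟨m, h⟩ else 0) n : ℚ))
        = hcW r (fun n => (if h : n < r then ((d ⟨n, h⟩ : ℕ) : ℚ) else 0) + (r : ℚ) - 1 - n) := by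
      apply hc_W_congr
      intro n hn
      rw [hcX]
      simp only [dif_pos hn]
      rw [Nat.cast_add, Nat.cast_sub (show n ≤ r - 1 by omega),
        Nat.cast_sub (show 1 ≤ r by omega), Nat.cast_one]
      ring
    rw [hcong, hc_W_vand]
    congr 1
    congr 1
    ext i j
    rw [Matrix.vandermonde_apply]
    simp only [Matrix.of_apply, dif_pos i.isLt]
  rw [Finset.sum_congr rfl step1, ← Finset.mul_sum]
  have step2 := hc_sum_det r (fun i : Fin r => Finset.Icc (lam (↑i + 1)) (lam ↑i))
    (fun i t j => ((t : ℚ) + (r : ℚ) - 1 - ((i : ℕ) : ℚ)) ^ (j : ℕ))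
  rw [step2]
  set c : Fin r → ℕ → ℚ :=
    fun j n => hcQ ↑j (hcX (r + 1) lam n) - hcQ ↑j (hcX (r + 1) lam r) with hcdef
  have hc0 : ∀ j, c j r = 0 := fun j => sub_self _
  have hBQ : (Matrix.of fun i j : Fin r =>
        ∑ t ∈ Finset.Icc (lam ((i : ℕ) + 1)) (lam (i : ℕ)),
          ((t : ℚ) + (r : ℚ) - 1 - ((i : ℕ) : ℚ)) ^ (j : ℕ))
      = Matrix.of (fun i j : Fin r => c j (i : ℕ) - c j ((i : ℕ) + 1)) := by
    ext i j
    simp only [Matrix.of_apply]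
    have hb := hc_B_entry r lam hmono (i : ℕ) (j : ℕ) i.isLt
    have hb2 : ∑ t ∈ Finset.Icc (lam ((i : ℕ) + 1)) (lam (i : ℕ)),
        ((t : ℚ) + (r : ℚ) - 1 - ((i : ℕ) : ℚ)) ^ (j : ℕ)
        = ∑ t ∈ Finset.Icc (lam ((i : ℕ) + 1)) (lam (i : ℕ)),
          ((t : ℚ) + (r : ℚ) - 1 - ((i : ℕ) : ℚ)) ^ (j : ℕ) := rfl
    rw [show ∀ A B C : ℚ, A - B = (A - C) - (B - C) by intros; ring] at hb
    · exact hb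
  rw [hBQ, ← hc_L_mul r c hc0, Matrix.det_mul, hc_triL, one_mul]
  have hCm := hc_Cm_mul r (fun i : Fin r => hcX (r + 1) lam ↑i) (hcX (r + 1) lam r)
  simp only [hcdef]
  rw [hCm, Matrix.det_mul, hc_triU]
  rw [hc_Vb_mul r (fun i : Fin r => ((hcX (r + 1) lam ↑i : ℕ) : ℚ))
    ((hcX (r + 1) lam r : ℕ) : ℚ)]
  rw [Matrix.det_mul, Matrix.det_mul, Matrix.det_diagonal, hc_triU2, mul_one]
  have hdetv : (Matrix.vandermonde fun i : Fin r => ((hcX (r + 1) lam ↑i : ℕ) : ℚ)).det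
      = hcE r * hcW r fX := by
    have h := hc_W_vand r fX
    have h2 := congrArg (fun z => hcE r * z) h
    rw [← mul_assoc, hc_E_sq, one_mul] at h2
    exact h2.symm
  rw [hdetv]
  have hprod : (∏ i : Fin r, (((hcX (r + 1) lam ↑i : ℕ) : ℚ) - ((hcX (r + 1) lam r : ℕ) : ℚ)))
      = ∏ i ∈ range r, (fX i - fX r) :=
    Fin.prod_univ_eq_prod_range (fun n => (fX n - fX r)) r
  rw [hprod, hc_W_succ r fX]
  have hE := hc_E_sq r
  have hfac : (r.factorial : ℚ) ≠ 0 := Nat.cast_ne_zero.mpr r.factorial_ne_zero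
  field_simp
  ring_nf
  rw [sq, hE, one_mul]
  rw [mul_comm]
  simp only [neg_add_eq_sub]

end PartB4

section PartC

lemma hc_X_strict (r : ℕ) (lam : ℕ → ℕ) (hmono : ∀ i j, i ≤ j → lam j ≤ lam i)
    (a b : ℕ) (hab : a < b) (hbr : b ≤ r - 1) : hcX r lam b < hcX r lam a := by
  have := hmono a b (le_of_lt hab)
  rw [hcX, hcX]
  omega

lemma hc_legs (r : ℕ) (lam : ℕ → ℕ) (hmono : ∀ i j, i ≤ j → lam j ≤ lam i)
    (i k j : ℕ) (hik : i ≤ k) (hkr : k < r) (hj1 : lam (k + 1) ≤ j) (hj2 : j < lam k) :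
    (range r).filter (fun m => i < m ∧ j < lam m) = Ioc i k := by
  ext m
  simp only [mem_filter, mem_range, mem_Ioc]
  constructor
  · rintro ⟨_, him, hjm⟩
    refine ⟨him, ?_⟩
    by_contra hmk
    have := hmono (k + 1) m (by omega)
    omega
  · rintro ⟨him, hmk⟩
    have := hmono m k hmk
    exact ⟨by omega, him, by omega⟩

lemma hc_row_claim (r : ℕ) (lam : ℕ → ℕ) (hmono : ∀ i j, i ≤ j → lam j ≤ lam i)
    (hzero : ∀ n, r ≤ n → lam n = 0) (i : ℕ) (hi : i < r) :
    ∀ t k, r - k = t → i ≤ k → k ≤ r →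
    (∏ j ∈ range (lam k), (((lam i - j : ℕ) : ℚ)
        + (((range r).filter (fun m => i < m ∧ j < lam m)).card : ℚ)))
      * (((hcX r lam i - hcX r lam k : ℕ).factorial : ℚ))
      * ∏ m ∈ Ioo k r, ((hcX r lam i - hcX r lam m : ℕ) : ℚ)
    = ((hcX r lam i).factorial : ℚ) := by
  intro t
  induction t with
  | zero =>
      intro k ht hik hkr
      rw [show k = r by omega]
      have h0 : lam r = 0 := hzero r le_rfl
      have hXr : hcX r lam r = 0 := by rw [hcX]; omega
      rw [h0, hXr]
      simp
  | succ t ih =>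
      intro k ht hik hkr
      have hkr' : k < r := by omega
      have hlamle : lam k ≤ lam i := hmono i k hik
      have hlamk1 : lam (k + 1) ≤ lam k := hmono k (k + 1) (by omega)
      -- split the range product
      rw [← Finset.prod_range_mul_prod_Ico _ hlamk1]
      -- segment terms
      have hseg : ∀ j ∈ Ico (lam (k + 1)) (lam k),
          (((lam i - j : ℕ) : ℚ)
              + (((range r).filter (fun m => i < m ∧ j < lam m)).card : ℚ))
            = (((lam i - j + (k - i) : ℕ)) : ℚ) := by
        intro j hj
        rw [mem_Ico] at hj
        rw [hc_legs r lam hmono i k j hik hkr' hj.1 hj.2, Nat.card_Ioc]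
        push_cast
        ring
      have hdesc := hc_prod_desc (lam i) (k - i) (lam (k + 1)) (lam k) hlamk1 hlamle
      rw [Finset.prod_congr rfl hseg]
      -- now two cases
      by_cases hk1 : k + 1 = r
      · have hIoo : Ioo k r = (∅ : Finset ℕ) := by
          ext x
          simp only [mem_Ioo, Finset.notMem_empty, iff_false]
          omega
        have hlamr : lam (k + 1) = 0 := by rw [hk1]; exact hzero r le_rfl
        have he1 : lam i - lam k + (k - i) = hcX r lam i - hcX r lam k := by
          rw [hcX, hcX]
          omega
        have he2 : lam i - lam (k + 1) + (k - i) = hcX r lam i := by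
          rw [hcX]
          omega
        rw [he1, he2] at hdesc
        have ihr := ih (k + 1) (by omega) (by omega) (by omega)
        have hXk1 : hcX r lam (k + 1) = 0 := by
          rw [hcX, hk1, hzero r le_rfl]
          omega
        rw [hXk1, Nat.sub_zero] at ihr
        have hIoo2 : Ioo (k + 1) r = (∅ : Finset ℕ) := by
          ext x
          simp only [mem_Ioo, Finset.notMem_empty, iff_false]
          omega
        rw [hIoo2, Finset.prod_empty, mul_one] at ihr
        rw [hIoo, Finset.prod_empty, mul_one, mul_assoc, hdesc]
        exact ihr
      · have hk1r : k + 1 ≤ r - 1 := by omega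
        have hstrict : hcX r lam (k + 1) < hcX r lam i := by
          rcases Nat.lt_or_ge i (k + 1) with h | h
          · exact hc_X_strict r lam hmono i (k + 1) h hk1r
          · omega
        have he1 : lam i - lam k + (k - i) = hcX r lam i - hcX r lam k := by
          have := hmono i k hik
          rw [hcX, hcX]
          omega
        have he2 : lam i - lam (k + 1) + (k - i) = hcX r lam i - hcX r lam (k + 1) - 1 := by
          have := hmono i (k + 1) (by omega)
          rw [hcX, hcX]
          omega
        rw [he1, he2] at hdesc
        have hIoo : Ioo k r = insert (k + 1) (Ioo (k + 1) r) := by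
          ext x
          simp only [mem_Ioo, mem_insert]
          omega
        rw [hIoo, Finset.prod_insert (by simp)]
        have ihr := ih (k + 1) (by omega) (by omega) (by omega)
        have hfacstep : ((hcX r lam i - hcX r lam (k + 1) - 1).factorial : ℚ)
            * ((hcX r lam i - hcX r lam (k + 1) : ℕ) : ℚ)
            = ((hcX r lam i - hcX r lam (k + 1)).factorial : ℚ) := by
          rw [← Nat.cast_mul]
          congr 1
          rw [mul_comm]
          exact Nat.mul_factorial_pred (by omega)
        linear_combination ihr
          + ((∏ j ∈ range (lam (k + 1)), (((lam i - j : ℕ) : ℚ)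
              + (((range r).filter (fun m => i < m ∧ j < lam m)).card : ℚ)))
            * (∏ m ∈ Ioo (k + 1) r, ((hcX r lam i - hcX r lam m : ℕ) : ℚ))
            * ((hcX r lam i - hcX r lam (k + 1) : ℕ) : ℚ)) * hdesc
          + ((∏ j ∈ range (lam (k + 1)), (((lam i - j : ℕ) : ℚ)
              + (((range r).filter (fun m => i < m ∧ j < lam m)).card : ℚ)))
            * (∏ m ∈ Ioo (k + 1) r, ((hcX r lam i - hcX r lam m : ℕ) : ℚ))) * hfacstep
end PartC

section PartC2

lemma hc_row_final (r : ℕ) (lam : ℕ → ℕ) (hmono : ∀ i j, i ≤ j → lam j ≤ lam i)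
    (hzero : ∀ n, r ≤ n → lam n = 0) (i : ℕ) (hi : i < r) :
    ∏ j ∈ range (lam i), (((r : ℚ) + (j : ℚ) - (i : ℚ)) /
        (((lam i - j : ℕ) : ℚ) +
          (((range r).filter (fun k => i < k ∧ j < lam k)).card : ℚ)))
      = (∏ m ∈ Ioo i r, ((hcX r lam i - hcX r lam m : ℕ) : ℚ))
        / (((r - 1 - i).factorial : ℚ)) := by
  rw [Finset.prod_div_distrib]
  have hnum : (∏ j ∈ range (lam i), ((r : ℚ) + (j : ℚ) - (i : ℚ)))
      = ∏ j ∈ range (lam i), (((r - i) + j : ℕ) : ℚ) := by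
    refine Finset.prod_congr rfl fun j _ => ?_
    rw [Nat.cast_add, Nat.cast_sub (by omega)]
    ring
  have hasc := hc_prod_asc (r - i) (lam i) (by omega)
  have he1 : r - i - 1 = r - 1 - i := by omega
  have he2 : r - i + lam i - 1 = hcX r lam i := by rw [hcX]; omega
  rw [he1, he2] at hasc
  have hden := hc_row_claim r lam hmono hzero i hi (r - i) i rfl le_rfl (le_of_lt hi)
  rw [Nat.sub_self, Nat.factorial_zero] at hden
  have hXfac : ((hcX r lam i).factorial : ℚ) ≠ 0 :=
    Nat.cast_ne_zero.mpr (Nat.factorial_ne_zero _)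
  have hfac : (((r - 1 - i).factorial : ℚ)) ≠ 0 :=
    Nat.cast_ne_zero.mpr (Nat.factorial_ne_zero _)
  have hdenne : (∏ j ∈ range (lam i), (((lam i - j : ℕ) : ℚ)
      + (((range r).filter (fun m => i < m ∧ j < lam m)).card : ℚ))) ≠ 0 := by
    intro h
    rw [h, zero_mul, zero_mul] at hden
    exact hXfac hden.symm
  rw [div_eq_div_iff hdenne hfac]
  rw [hnum]
  push_cast at hasc hden ⊢
  nlinarith [hasc, hden]

end PartC2

section Final

lemma hc_rhs (r : ℕ) (lam : ℕ → ℕ) (hmono : ∀ i j, i ≤ j → lam j ≤ lam i)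
    (hzero : ∀ n, r ≤ n → lam n = 0) :
    (∏ p ∈ (range r ×ˢ range (lam 0)).filter (fun p => p.2 < lam p.1),
        (((r : ℚ) + (p.2 : ℚ) - (p.1 : ℚ)) /
          (((lam p.1 - p.2 : ℕ) : ℚ) +
            (((range r).filter (fun k => p.1 < k ∧ p.2 < lam k)).card : ℚ))))
      = hcD r lam := by
  classical
  rw [Finset.prod_filter, Finset.prod_product]
  have hinner : ∀ i ∈ range r,
      (∏ j ∈ range (lam 0), if j < lam i then
          (((r : ℚ) + (j : ℚ) - (i : ℚ)) /
            (((lam i - j : ℕ) : ℚ) +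
              (((range r).filter (fun k => i < k ∧ j < lam k)).card : ℚ))) else 1)
        = (∏ m ∈ Ioo i r, ((hcX r lam i - hcX r lam m : ℕ) : ℚ))
          / (((r - 1 - i).factorial : ℚ)) := by
    intro i hi
    rw [mem_range] at hi
    rw [← Finset.prod_filter]
    have hf : (range (lam 0)).filter (fun j => j < lam i) = range (lam i) := by
      ext j
      simp only [mem_filter, mem_range]
      have := hmono 0 i (Nat.zero_le i)
      constructor
      · exact fun h => h.2
      · exact fun h => ⟨by omega, h⟩
    rw [hf]
    exact hc_row_final r lam hmono hzero i hi
  rw [Finset.prod_congr rfl hinner, Finset.prod_div_distrib]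
  rw [hcD, hc_W_cast r (hcX r lam)
    (fun i m him hmr => hc_X_anti r lam hmono i m (le_of_lt him))]
  congr 1
  exact Finset.prod_range_reflect (fun i => ((i.factorial : ℚ))) r

end Final


section FinalGlue

lemma hc_base (lam : ℕ → ℕ) (h0 : ∀ i, lam i = 0) : ssytCount 0 lam = 1 := by
  have hset : {T : ℕ → ℕ → ℕ | IsSSYT lam 0 T ∧ ZeroOutside lam T}
      = {fun _ _ => 0} := by
    ext T
    simp only [Set.mem_setOf_eq, Set.mem_singleton_iff]
    constructor
    · rintro ⟨hs, hz⟩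
      funext i j
      exact hz i j (by rw [h0 i]; omega)
    · rintro rfl
      constructor
      · refine ⟨fun i j hj => ?_, fun i j k hjk hk => ?_, fun i j hj => ?_⟩
        · rw [h0 i] at hj; omega
        · exact le_refl _
        · rw [h0 (i + 1)] at hj; omega
      · intro i j hj
        rfl
  rw [ssytCount, hset, Set.ncard_singleton]

lemma hc_main : ∀ r lam, IsPartition r lam → (ssytCount r lam : ℚ) = hcD r lam := by
  intro r
  induction r with
  | zero =>
      intro lam hp
      rw [hc_base lam (fun i => hp.2 i (Nat.zero_le i))]
      rw [hcD, hcW]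
      simp
  | succ r ih =>
      intro lam hp
      rw [hc_rec r lam hp, Nat.cast_sum]
      have hterm : ∀ d ∈ Fintype.piFinset (fun i : Fin r => Finset.Icc (lam (↑i + 1)) (lam ↑i)),
          ((ssytCount r (fun n => if h : n < r then d ⟨n, h⟩ else 0) : ℕ) : ℚ)
            = hcW r (fun n =>
                (hcX r (fun m => if h : m < r then d ⟨m, h⟩ else 0) n : ℚ))
              / ∏ i ∈ range r, (Nat.factorial i : ℚ) := by
        intro d hd
        rw [ih _ (hc_mu_isPart hp d (Fintype.mem_piFinset.mp hd)), hcD]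
      rw [Finset.sum_congr rfl hterm, ← Finset.sum_div, hc_sum_W r lam hp.1]
      rw [hcD, Finset.prod_range_succ, div_div]
      ring_nf

end FinalGlue

/-- Hook content formula: the number of SSYTs of shape `lam` with entries in `{1,…,r}`
equals `∏_u (r + c(u)) / h(u)` over the boxes `u` of `lam`, where `c(u) = j - i`
is the content and `h(u)` the hook length of the box in row `i`, column `j`. -/
theorem stmt1 (r : ℕ) (lam : ℕ → ℕ) (hp : IsPartition r lam) :
    (ssytCount r lam : ℚ) =
      ∏ p ∈ (Finset.range r ×ˢ Finset.range (lam 0)).filter (fun p => p.2 < lam p.1),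
        (((r : ℚ) + (p.2 : ℚ) - (p.1 : ℚ)) /
          (((lam p.1 - p.2 : ℕ) : ℚ) +
            (((Finset.range r).filter (fun k => p.1 < k ∧ p.2 < lam k)).card : ℚ))) := by
  rw [hc_main r lam hp]
  exact (hc_rhs r lam hp.1 hp.2).symm
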